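/- arXiv:2304.04397 — 2 statements merged into one kernel-verified Lean document; each statement's English description precedes it below -/
import Mathlib

section
/- Let A, B ∈ ℝ^{n×n}, and define D_A = diag(exp(A)·1_n) and D_B = diag(exp(B)·1_n), where exp is applied entrywise. Suppose c₁, c₂, r > 0 and: (1) for all i, |（D_A)_{i,i} - (D_B)_{i,i}| ≤ c₁·r·min{(D_A)_{i,i}, (D_B)_{i,i}}; (2) for all i, j, |exp(A_{i,j}) - exp(B_{i,j})| ≤ c₂·r·min{exp(A_{i,j}), exp(B_{i,j})}. Then ‖D_A⁻¹ exp(A) - D_B⁻¹ exp(B)‖_∞ ≤ (c₁ + c₂)·r, where ‖M‖_∞ = max_{i,j} |M_{i,j}|. -/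
theorem perturb_attention {n : ℕ} (A B : Matrix (Fin n) (Fin n) ℝ) (c₁ c₂ r : ℝ)
    (hc₁ : 0 < c₁) (hc₂ : 0 < c₂) (hr : 0 < r)
    (h₁ : ∀ i : Fin n,
      |(∑ j, Real.exp (A i j)) - (∑ j, Real.exp (B i j))| ≤
        c₁ * r * min (∑ j, Real.exp (A i j)) (∑ j, Real.exp (B i j)))
    (h₂ : ∀ i j : Fin n,
      |Real.exp (A i j) - Real.exp (B i j)| ≤
        c₂ * r * min (Real.exp (A i j)) (Real.exp (B i j))) :
    ∀ i j : Fin n,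
      |Real.exp (A i j) / (∑ k, Real.exp (A i k)) -
        Real.exp (B i j) / (∑ k, Real.exp (B i k))| ≤ (c₁ + c₂) * r := by
  intro i j
  set a := Real.exp (A i j) with ha_def
  set b := Real.exp (B i j) with hb_def
  set s := ∑ k, Real.exp (A i k) with hs_def
  set t := ∑ k, Real.exp (B i k) with ht_def
  have ha : 0 < a := Real.exp_pos _
  have hb : 0 < b := Real.exp_pos _
  have hs : 0 < s := Finset.sum_pos (fun k _ => Real.exp_pos _) ⟨i, Finset.mem_univ i⟩
  have ht : 0 < t := Finset.sum_pos (fun k _ => Real.exp_pos _) ⟨i, Finset.mem_univ i⟩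
  have has : a ≤ s := Finset.single_le_sum (f := fun k => Real.exp (A i k))
    (fun k _ => (Real.exp_pos _).le) (Finset.mem_univ j)
  have hbt : b ≤ t := Finset.single_le_sum (f := fun k => Real.exp (B i k))
    (fun k _ => (Real.exp_pos _).le) (Finset.mem_univ j)
  have h1' := h₁ i
  have h2' := h₂ i j
  have hmina : min a b ≤ a := min_le_left _ _
  have hmins : min s t ≤ s := min_le_left _ _
  have heq : a / s - b / t = (a - b) / s + b * (t - s) / (s * t) := by
    field_simp; ring
  have hbound1 : |(a - b) / s| ≤ c₂ * r := by
    rw [abs_div, abs_of_pos hs, div_le_iff₀ hs]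
    calc |a - b| ≤ c₂ * r * min a b := h2'
      _ ≤ c₂ * r * s := by
        apply mul_le_mul_of_nonneg_left (hmina.trans has)
        positivity
  have hbound2 : |b * (t - s) / (s * t)| ≤ c₁ * r := by
    rw [abs_div, abs_of_pos (mul_pos hs ht), div_le_iff₀ (mul_pos hs ht), abs_mul,
      abs_of_pos hb, abs_sub_comm]
    calc b * |s - t| ≤ b * (c₁ * r * min s t) := by
          apply mul_le_mul_of_nonneg_left h1' hb.le
      _ = c₁ * r * (b * min s t) := by ring
      _ ≤ c₁ * r * (t * s) := by
          apply mul_le_mul_of_nonneg_left (mul_le_mul hbt hmins (le_min hs.le ht.le) ht.le)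
          positivity
      _ = c₁ * r * (s * t) := by ring
  calc |a / s - b / t| = |(a - b) / s + b * (t - s) / (s * t)| := by rw [heq]
    _ ≤ |(a - b) / s| + |b * (t - s) / (s * t)| := abs_add_le _ _
    _ ≤ c₂ * r + c₁ * r := add_le_add hbound1 hbound2
    _ = (c₁ + c₂) * r := by ring
end

section
/- Let X ∈ ℝ^{n×d} with ‖XX⊤‖_∞ ≤ r for some r ∈ (0, 0.1), and let Y ∈ ℝ^{n×m} satisfy (1-ε)·XX⊤ ⪯ YY⊤ ⪯ (1+ε)·XX⊤ for some ε ∈ (0,1). Then ‖D(Y)⁻¹ exp(YY⊤) - D(X)⁻¹ exp(XX⊤)‖_∞ ≤ 24r, where D(Z) := diag(exp(ZZ⊤)·1_n) and exp is applied entrywise. -/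
open Matrix

lemma psd_diag_nonneg {n : ℕ} {P : Matrix (Fin n) (Fin n) ℝ} (hP : P.PosSemidef) (k : Fin n) :
    0 ≤ P k k := by
  simpa [single_dotProduct, mulVec_single] using hP.dotProduct_mulVec_nonneg (Pi.single k 1)

lemma psd_abs_entry {n : ℕ} {P : Matrix (Fin n) (Fin n) ℝ} (hP : P.PosSemidef) (k l : Fin n) :
    |P k l| ≤ (P k k + P l l) / 2 := by
  have hsym : P l k = P k l := by
    have := congrFun (congrFun hP.1 k) l
    simpa using this
  have key : ∀ c : ℝ, 0 ≤ P k k + c * (2 * P k l) + c ^ 2 * P l l := by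
    intro c
    have h := hP.dotProduct_mulVec_nonneg ((Pi.single k 1 : Fin n → ℝ) + c • (Pi.single l 1 : Fin n → ℝ))
    simp only [star_trivial, add_dotProduct, dotProduct_add, smul_dotProduct, dotProduct_smul,
      mulVec_add, mulVec_smul, single_dotProduct, mulVec_single, Pi.smul_apply, smul_eq_mul,
      col_apply, MulOpposite.op_one, one_smul, one_mul] at h
    rw [hsym] at h
    nlinarith [h]
  have h1 := key 1
  have h2 := key (-1)
  rw [abs_le]
  constructor <;> nlinarith

theorem attention_sparsification {n d m : ℕ}
    (X : Matrix (Fin n) (Fin d) ℝ) (Y : Matrix (Fin n) (Fin m) ℝ) (r ε : ℝ)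
    (hr : 0 < r) (hr1 : r < 0.1) (hε : 0 < ε) (hε1 : ε < 1)
    (hX : ∀ i j, |(X * Xᵀ) i j| ≤ r)
    (h₁ : (Y * Yᵀ - (1 - ε) • (X * Xᵀ)).PosSemidef)
    (h₂ : ((1 + ε) • (X * Xᵀ) - Y * Yᵀ).PosSemidef) :
    ∀ i j : Fin n,
      |Real.exp ((Y * Yᵀ) i j) / (∑ k, Real.exp ((Y * Yᵀ) i k)) -
        Real.exp ((X * Xᵀ) i j) / (∑ k, Real.exp ((X * Xᵀ) i k))| ≤ 24 * r := by
  intro i j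
  set A := X * Xᵀ with hA
  set B := Y * Yᵀ with hB
  -- entrywise closeness
  have hdiff : ∀ k l : Fin n, |B k l - A k l| ≤ 3 * r := by
    intro k l
    have hPd : ∀ k : Fin n, (B - (1 - ε) • A) k k ≤ 2 * ε * r := by
      intro k
      have hq := psd_diag_nonneg h₂ k
      simp only [Matrix.sub_apply, Matrix.smul_apply, smul_eq_mul] at hq ⊢
      have hAk : A k k ≤ r := (abs_le.mp (hX k k)).2
      nlinarith
    have habs := psd_abs_entry h₁ k l
    have h1 := hPd k; have h2 := hPd l
    have hP : |((B - (1 - ε) • A) k l)| ≤ 2 * ε * r := le_trans habs (by linarith)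
    have hEl := abs_le.mp (hX k l)
    have hP' := abs_le.mp hP
    simp only [Matrix.sub_apply, Matrix.smul_apply, smul_eq_mul] at hP'
    have he1 : ε * A k l ≤ ε * r := mul_le_mul_of_nonneg_left hEl.2 hε.le
    have he2 : -(ε * r) ≤ ε * A k l := by nlinarith [hEl.1]
    rw [abs_le]
    constructor <;> nlinarith [hP'.1, hP'.2]
  have hSt_pos : 0 < ∑ k, Real.exp (A i k) :=
    Finset.sum_pos (fun k _ => Real.exp_pos _) ⟨i, Finset.mem_univ i⟩
  have hSs_pos : 0 < ∑ k, Real.exp (B i k) :=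
    Finset.sum_pos (fun k _ => Real.exp_pos _) ⟨i, Finset.mem_univ i⟩
  set E := Real.exp (3 * r) with hE
  have hE_pos : 0 < E := Real.exp_pos _
  have hexp_le : ∀ k, Real.exp (B i k) ≤ E * Real.exp (A i k) := by
    intro k
    rw [hE, ← Real.exp_add]
    exact Real.exp_le_exp.mpr (by linarith [(abs_le.mp (hdiff i k)).2])
  have hexp_ge : ∀ k, Real.exp (A i k) ≤ E * Real.exp (B i k) := by
    intro k
    rw [hE, ← Real.exp_add]
    exact Real.exp_le_exp.mpr (by linarith [(abs_le.mp (hdiff i k)).1])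
  have hSs_le : ∑ k, Real.exp (B i k) ≤ E * ∑ k, Real.exp (A i k) := by
    rw [Finset.mul_sum]; exact Finset.sum_le_sum fun k _ => hexp_le k
  have hSt_le : ∑ k, Real.exp (A i k) ≤ E * ∑ k, Real.exp (B i k) := by
    rw [Finset.mul_sum]; exact Finset.sum_le_sum fun k _ => hexp_ge k
  set p := Real.exp (B i j) / ∑ k, Real.exp (B i k) with hp
  set q := Real.exp (A i j) / ∑ k, Real.exp (A i k) with hq
  set F := Real.exp (6 * r) with hF
  have hEF : E * E = F := by rw [hE, hF, ← Real.exp_add]; ring_nf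
  have hF1 : 1 ≤ F := Real.one_le_exp (by linarith)
  have hF4 : F ≤ 4 := by
    have : F < Real.exp 1 := Real.exp_lt_exp.mpr (by linarith)
    nlinarith [Real.exp_one_lt_d9]
  have hF6 : F - 1 ≤ 6 * r * F := by
    have h := Real.add_one_le_exp (-(6 * r))
    rw [Real.exp_neg, ← hF] at h
    have hFpos : 0 < F := Real.exp_pos _
    have : (-(6 * r) + 1) * F ≤ F⁻¹ * F := mul_le_mul_of_nonneg_right h hFpos.le
    rw [inv_mul_cancel₀ hFpos.ne'] at this
    nlinarith
  have hq_pos : 0 < q := div_pos (Real.exp_pos _) hSt_pos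
  have hq_le1 : q ≤ 1 := by
    rw [hq, div_le_one hSt_pos]
    exact Finset.single_le_sum (fun k _ => (Real.exp_pos (A i k)).le) (Finset.mem_univ j)
  have hpFq : p ≤ F * q := by
    rw [hp, hq, ← mul_div_assoc, div_le_div_iff₀ hSs_pos hSt_pos]
    calc Real.exp (B i j) * ∑ k, Real.exp (A i k)
        ≤ (E * Real.exp (A i j)) * (E * ∑ k, Real.exp (B i k)) :=
          mul_le_mul (hexp_le j) hSt_le hSt_pos.le (by positivity)
      _ = F * Real.exp (A i j) * ∑ k, Real.exp (B i k) := by rw [← hEF]; ring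
  have hqFp : q ≤ F * p := by
    rw [hq, hp, ← mul_div_assoc, div_le_div_iff₀ hSt_pos hSs_pos]
    calc Real.exp (A i j) * ∑ k, Real.exp (B i k)
        ≤ (E * Real.exp (B i j)) * (E * ∑ k, Real.exp (A i k)) :=
          mul_le_mul (hexp_ge j) hSs_le hSs_pos.le (by positivity)
      _ = F * Real.exp (B i j) * ∑ k, Real.exp (A i k) := by rw [← hEF]; ring
  rw [abs_le]
  have hFpos : (0 : ℝ) < F := Real.exp_pos _
  constructor
  · -- q - p ≤ 24 r, i.e. -(24r) ≤ p - q
    have : q - p ≤ (F - 1) * q := by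
      have hpq : q / F ≤ p := by rw [div_le_iff₀ hFpos]; linarith [hqFp]
      have : q - p ≤ q - q / F := by linarith
      have h2 : q - q / F = (F - 1) * q / F := by field_simp
      rw [h2] at this
      have h3 : (F - 1) * q / F ≤ (F - 1) * q := by
        apply div_le_self (by nlinarith) (by linarith)
      linarith
    nlinarith
  · have : p - q ≤ (F - 1) * q := by nlinarith [hpFq]
    nlinarith
end
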